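/- Every cycle of length greater than 4 in the complete bipartite graph K_{m,m} can be written as a symmetric difference of edge sets of 4-edge cycles of K_{m,m}. -/

import Mathlib

open Finset

/-- A 4-edge cycle of the complete bipartite graph `K_{m,m}` on parts
`X = Fin m ⊕ ∅` and `Y`, as a set of edges: it visits two distinct vertices of `X`
and two distinct vertices of `Y`. -/
def IsFourCycle (m : ℕ) (t : Finset (Sym2 (Fin m ⊕ Fin m))) : Prop :=
  ∃ a c b d : Fin m, a ≠ c ∧ b ≠ d ∧
    t = {s(Sum.inl a, Sum.inr b), s(Sum.inr b, Sum.inl c),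
         s(Sum.inl c, Sum.inr d), s(Sum.inr d, Sum.inl a)}

lemma path_edge_len {V : Type*} {G : SimpleGraph V} {a b : V} (p : G.Walk a b)
    (hp : p.IsPath) (h : s(a,b) ∈ p.edges) : p.length = 1 := by
  cases p with
  | nil => simp at h
  | @cons _ c _ hadj q =>
    rw [SimpleGraph.Walk.cons_isPath_iff] at hp
    rw [SimpleGraph.Walk.edges_cons, List.mem_cons] at h
    rcases h with h | h
    · rw [Sym2.eq_iff] at h
      rcases h with ⟨-, h2⟩ | ⟨h1, h2⟩
      · subst h2
        have := (SimpleGraph.Walk.isPath_iff_eq_nil (p := q)).mp hp.1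
        subst this; simp
      · subst h1; exact absurd rfl hadj.ne
    · exact absurd (q.fst_mem_support_of_mem_edges h) hp.2

lemma adj_trans3 {V W : Type*} {a b c d : V ⊕ W}
    (h1 : (completeBipartiteGraph V W).Adj a b)
    (h2 : (completeBipartiteGraph V W).Adj b c)
    (h3 : (completeBipartiteGraph V W).Adj c d) :
    (completeBipartiteGraph V W).Adj a d := by
  cases a <;> cases b <;> cases c <;> cases d <;> simp_all

lemma fourcycle_of_chain (m : ℕ) (v v1 v2 v3 : Fin m ⊕ Fin m)
    (h1 : (completeBipartiteGraph (Fin m) (Fin m)).Adj v v1)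
    (h2 : (completeBipartiteGraph (Fin m) (Fin m)).Adj v1 v2)
    (h3 : (completeBipartiteGraph (Fin m) (Fin m)).Adj v2 v3)
    (h02 : v ≠ v2) (h13 : v1 ≠ v3) :
    IsFourCycle m {s(v,v1), s(v1,v2), s(v2,v3), s(v3,v)} := by
  cases v with
  | inl a =>
    cases v1 with
    | inl => simp at h1
    | inr b =>
      cases v2 with
      | inr => simp at h2
      | inl c =>
        cases v3 with
        | inl => simp at h3
        | inr d =>
          refine ⟨a, c, b, d, by simpa using h02, by simpa using h13, rfl⟩
  | inr x =>
    cases v1 with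
    | inr => simp at h1
    | inl y =>
      cases v2 with
      | inl => simp at h2
      | inr z =>
        cases v3 with
        | inr => simp at h3
        | inl u =>
          refine ⟨y, u, z, x, by simpa using h13, Ne.symm (by simpa using h02), ?_⟩
          ext e
          simp only [Finset.mem_insert, Finset.mem_singleton]
          constructor <;>
          · intro h
            rcases h with h | h | h | h <;>
              rw [h, Sym2.eq_swap] <;> tauto

lemma indicator_split {α : Type*} [DecidableEq α] (e e1 e2 e3 e4 : α) (R : List α)
    (f1 : e1 ∉ R) (f2 : e2 ∉ R) (f3 : e3 ∉ R) (f4 : e4 ∉ R)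
    (g1 : e4 ≠ e1) (g2 : e4 ≠ e2) (g3 : e4 ≠ e3) :
    (if e ∈ e1 :: e2 :: e3 :: R then (1 : ZMod 2) else 0)
      = (if e ∈ ({e1, e2, e3, e4} : Finset α) then 1 else 0)
        + (if e ∈ e4 :: R then 1 else 0) := by
  simp only [List.mem_cons, Finset.mem_insert, Finset.mem_singleton]
  by_cases a1 : e = e1 <;> by_cases a2 : e = e2 <;> by_cases a3 : e = e3 <;>
    by_cases a4 : e = e4 <;> by_cases a5 : e ∈ R <;> simp_all <;> decide

lemma aux (m : ℕ) (n : ℕ) :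
    ∀ (v : Fin m ⊕ Fin m) (w : (completeBipartiteGraph (Fin m) (Fin m)).Walk v v),
    w.IsCycle → w.length = n →
    ∃ T : Finset (Finset (Sym2 (Fin m ⊕ Fin m))),
      (∀ t ∈ T, IsFourCycle m t) ∧
      ∀ e : Sym2 (Fin m ⊕ Fin m),
        (if e ∈ w.edges then (1 : ZMod 2) else 0) = ∑ t ∈ T, (if e ∈ t then 1 else 0) := by
  induction n using Nat.strong_induction_on with
  | _ n ih =>
  intro v w hw hn
  have h3le : 3 ≤ w.length := hw.three_le_length
  cases w with
  | nil => simp at h3le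
  | @cons _ v1 _ h1 p1 =>
  cases p1 with
  | nil => simp at h3le
  | @cons _ v2 _ h2 p2 =>
  cases p2 with
  | nil => simp at h3le
  | @cons _ v3 _ h3 rest =>
  have hedges := hw.isCircuit.isTrail.edges_nodup
  -- basic path facts from the cycle
  rw [SimpleGraph.Walk.cons_isCycle_iff] at hw
  obtain ⟨hp1, he1⟩ := hw
  rw [SimpleGraph.Walk.cons_isPath_iff] at hp1
  obtain ⟨hp2, hv1⟩ := hp1
  rw [SimpleGraph.Walk.cons_isPath_iff] at hp2
  obtain ⟨hp3, hv2⟩ := hp2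
  cases rest with
  | nil =>
    -- length-3 cycle: impossible in a bipartite graph
    exfalso
    clear * - h1 h2 h3
    cases v <;> cases v1 <;> cases v2 <;> simp_all
  | @cons _ v4 _ h4 rest2 =>
  obtain ⟨hp4, hv3⟩ := (SimpleGraph.Walk.cons_isPath_iff _ _).mp hp3
  cases rest2 with
  | nil =>
    -- base case: length-4 cycle
    refine ⟨{({s(v,v1), s(v1,v2), s(v2,v3), s(v3,v)} : Finset (Sym2 (Fin m ⊕ Fin m)))}, ?_, ?_⟩
    · intro t ht
      rw [Finset.mem_singleton] at ht
      subst ht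
      refine fourcycle_of_chain m v v1 v2 v3 h1 h2 h3 ?_ ?_
      · intro h; exact hv2 (by simp [h])
      · intro h; exact hv1 (by simp [h])
    · intro e
      rw [Finset.sum_singleton]
      refine if_congr ?_ rfl rfl
      simp [or_assoc]
  | @cons _ v5 _ h5 rest3 =>
  -- inductive step
  set R : (completeBipartiteGraph (Fin m) (Fin m)).Walk v3 v :=
    SimpleGraph.Walk.cons h4 (SimpleGraph.Walk.cons h5 rest3) with hR
  have hvmem : v ∈ R.support := SimpleGraph.Walk.end_mem_support R
  have hRpath : R.IsPath := hp3
  have hRlen : 2 ≤ R.length := by simp [hR]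
  -- adjacency v ~ v3
  have h' : (completeBipartiteGraph (Fin m) (Fin m)).Adj v v3 := adj_trans3 h1 h2 h3
  -- the new edge is not on R
  have he4 : s(v, v3) ∉ R.edges := by
    intro hmem
    rw [Sym2.eq_swap] at hmem
    have := path_edge_len R hRpath hmem
    omega
  -- the new shorter cycle
  have hw' : (SimpleGraph.Walk.cons h' R).IsCycle := by
    rw [SimpleGraph.Walk.cons_isCycle_iff]
    exact ⟨hRpath, he4⟩
  have hlen' : (SimpleGraph.Walk.cons h' R).length = n - 2 := by
    simp only [SimpleGraph.Walk.length_cons] at hn ⊢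
    omega
  obtain ⟨T', hT'1, hT'2⟩ := ih (n - 2) (by omega) v (SimpleGraph.Walk.cons h' R) hw' hlen'
  -- distinctness facts
  have hvv1 : v ≠ v1 := h1.ne
  have hvv2 : v ≠ v2 := fun h => hv2 (h ▸ hvmem)
  have hv3mem : v ∈ (SimpleGraph.Walk.cons h5 rest3).support :=
    SimpleGraph.Walk.end_mem_support _
  have hvv3 : v ≠ v3 := by
    intro h
    exact hv3 (h ▸ hv3mem)
  have hv1v3 : v1 ≠ v3 := by
    intro h
    exact hv1 (by simp [h])
  -- edge distinctness
  have g1 : s(v, v3) ≠ s(v, v1) := by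
    intro h
    rcases Sym2.eq_iff.mp h with ⟨-, h'⟩ | ⟨h', -⟩
    · exact hv1v3 h'.symm
    · exact hvv1 h'
  have g2 : s(v, v3) ≠ s(v1, v2) := by
    intro h
    rcases Sym2.eq_iff.mp h with ⟨h', -⟩ | ⟨h', -⟩
    · exact hvv1 h'
    · exact hvv2 h'
  have g3 : s(v, v3) ≠ s(v2, v3) := by
    intro h
    rcases Sym2.eq_iff.mp h with ⟨h', -⟩ | ⟨h', -⟩
    · exact hvv2 h'
    · exact hvv3 h'
  -- e1,e2,e3 not in R.edges
  simp only [SimpleGraph.Walk.edges_cons, List.nodup_cons] at hedges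
  have f1 : s(v,v1) ∉ R.edges :=
    fun h => hedges.1 (List.mem_cons_of_mem _ (List.mem_cons_of_mem _ h))
  have f2 : s(v1,v2) ∉ R.edges := fun h => hedges.2.1 (List.mem_cons_of_mem _ h)
  have f3 : s(v2,v3) ∉ R.edges := hedges.2.2.1
  set t0 : Finset (Sym2 (Fin m ⊕ Fin m)) :=
    {s(v,v1), s(v1,v2), s(v2,v3), s(v,v3)} with ht0def
  have ht0four : IsFourCycle m t0 := by
    have h4c := fourcycle_of_chain m v v1 v2 v3 h1 h2 h3 hvv2 hv1v3
    have hswap : s(v3,v) = s(v,v3) := Sym2.eq_swap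
    rwa [hswap] at h4c
  have key2 : ∀ e : Sym2 (Fin m ⊕ Fin m),
      (if e ∈ (SimpleGraph.Walk.cons h1 (SimpleGraph.Walk.cons h2
        (SimpleGraph.Walk.cons h3 R))).edges then (1 : ZMod 2) else 0)
      = (if e ∈ t0 then 1 else 0)
        + (if e ∈ (SimpleGraph.Walk.cons h' R).edges then 1 else 0) := by
    intro e
    simp only [SimpleGraph.Walk.edges_cons, ht0def]
    exact indicator_split e _ _ _ _ R.edges f1 f2 f3 he4 g1 g2 g3
  have hxx : ∀ x : ZMod 2, x + x = 0 := by decide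
  by_cases ht0 : t0 ∈ T'
  · refine ⟨T'.erase t0, fun t ht => hT'1 t (Finset.mem_of_mem_erase ht), ?_⟩
    intro e
    rw [key2 e, hT'2 e, ← Finset.add_sum_erase T' _ ht0, ← add_assoc, hxx, zero_add]
  · refine ⟨insert t0 T', ?_, ?_⟩
    · intro t ht
      rcases Finset.mem_insert.mp ht with rfl | ht
      · exact ht0four
      · exact hT'1 t ht
    · intro e
      rw [key2 e, hT'2 e, Finset.sum_insert ht0]

theorem stmt13 (m : ℕ) (v : Fin m ⊕ Fin m)
    (w : (completeBipartiteGraph (Fin m) (Fin m)).Walk v v)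
    (hw : w.IsCycle) (hlen : 4 < w.length) :
    ∃ T : Finset (Finset (Sym2 (Fin m ⊕ Fin m))),
      (∀ t ∈ T, IsFourCycle m t) ∧
      ∀ e : Sym2 (Fin m ⊕ Fin m),
        (if e ∈ w.edges then (1 : ZMod 2) else 0) = ∑ t ∈ T, (if e ∈ t then 1 else 0) := by
  obtain ⟨T, h1, h2⟩ := aux m w.length v w hw rfl
  exact ⟨T, h1, h2⟩
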